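/- Let A be a g×g symmetric positive definite real matrix, and let ϑ_ε(z) = Σ_{n∈ℤ^g} exp(-((1/2)nᵀAn + nᵀz)/ε) for ε > 0 (the sum converges). Then lim_{ε→0+} ε·log ϑ_ε(z) = -min_{n∈ℤ^g}{(1/2)nᵀAn + nᵀz} = Θ(z) for every z ∈ ℝ^g. -/

import Mathlib

open Matrix Filter

-- coercivity
lemma coercive {g : ℕ} {A : Matrix (Fin g) (Fin g) ℝ} (hA : A.PosDef) :
    ∃ c > 0, ∀ x : Fin g → ℝ, c * (∑ i, x i ^ 2) ≤ x ⬝ᵥ A.mulVec x := by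
  rcases Nat.eq_zero_or_pos g with hg | hg
  · subst hg
    exact ⟨1, one_pos, fun x => by simp [dotProduct]⟩
  · set Q : (Fin g → ℝ) → ℝ := fun x => x ⬝ᵥ A.mulVec x with hQ
    have hQcont : Continuous Q := by
      simp only [hQ, dotProduct, mulVec]
      fun_prop
    set K : Set (Fin g → ℝ) := {x | ∑ i, x i ^ 2 = 1} with hK
    have hKclosed : IsClosed K := isClosed_eq (by fun_prop) continuous_const
    have hKbdd : Bornology.IsBounded K := by
      apply (Metric.isBounded_closedBall (x := (0 : Fin g → ℝ)) (r := 1)).subset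
      intro x hx
      rw [Metric.mem_closedBall, dist_zero_right]
      rw [pi_norm_le_iff_of_nonneg zero_le_one]
      intro i
      rw [Real.norm_eq_abs, ← Real.sqrt_one, ← Real.sqrt_sq_eq_abs]
      apply Real.sqrt_le_sqrt
      rw [← hx]
      exact Finset.single_le_sum (f := fun j => x j ^ 2) (fun j _ => sq_nonneg _)
        (Finset.mem_univ i)
    have hKcompact : IsCompact K := Metric.isCompact_of_isClosed_isBounded hKclosed hKbdd
    have hKne : K.Nonempty := by
      refine ⟨fun i => if i = ⟨0, hg⟩ then 1 else 0, ?_⟩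
      simp [hK, apply_ite, Finset.sum_ite_eq']
    obtain ⟨x0, hx0K, hmin⟩ := hKcompact.exists_isMinOn hKne hQcont.continuousOn
    have hx0ne : x0 ≠ 0 := by
      intro h
      rw [hK] at hx0K
      simp [h] at hx0K
    have hc : 0 < Q x0 := by
      have := hA.dotProduct_mulVec_pos hx0ne
      simpa [hQ] using this
    refine ⟨Q x0, hc, fun x => ?_⟩
    rcases eq_or_ne x 0 with rfl | hx
    · simp [hQ, dotProduct]
    · have hSpos : 0 < ∑ i, x i ^ 2 := by
        obtain ⟨i, hi⟩ := Function.ne_iff.mp hx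
        exact Finset.sum_pos' (fun j _ => sq_nonneg _) ⟨i, Finset.mem_univ i, sq_pos_of_ne_zero hi⟩
      set s : ℝ := Real.sqrt (∑ i, x i ^ 2) with hs
      have hspos : 0 < s := Real.sqrt_pos.mpr hSpos
      have hs2 : s ^ 2 = ∑ i, x i ^ 2 := Real.sq_sqrt hSpos.le
      have huK : (s⁻¹ • x) ∈ K := by
        rw [hK]
        simp only [Set.mem_setOf_eq, Pi.smul_apply, smul_eq_mul, mul_pow, ← Finset.mul_sum]
        rw [← hs2]
        field_simp
      have hQu : Q (s⁻¹ • x) = s⁻¹ * (s⁻¹ * Q x) := by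
        simp only [hQ, smul_dotProduct, Matrix.mulVec_smul, dotProduct_smul, smul_eq_mul]
      have hle : Q x0 ≤ Q (s⁻¹ • x) := hmin huK
      rw [hQu] at hle
      have := mul_le_mul_of_nonneg_left hle (by positivity : (0:ℝ) ≤ s * s)
      have hss : s * s = ∑ i, x i ^ 2 := by rw [← hs2]; ring
      calc Q x0 * ∑ i, x i ^ 2 = s * s * Q x0 := by rw [hss]; ring
        _ ≤ s * s * (s⁻¹ * (s⁻¹ * Q x)) := this
        _ = Q x := by field_simp

lemma amgm_bound (a q t : ℝ) (hq : 0 < q) : (a+1) * t - q * t^2 ≤ (a+1)^2 / (4*q) := by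
  rw [le_div_iff₀ (by positivity)]
  nlinarith [sq_nonneg (2*q*t - (a+1))]

lemma summable_nat_exp (a q : ℝ) (hq : 0 < q) :
    Summable fun n : ℕ => Real.exp (a * n - q * (n:ℝ)^2) := by
  refine (Real.summable_exp_neg_nat.mul_left (Real.exp ((a+1)^2/(4*q)))).of_nonneg_of_le
    (fun n => (Real.exp_pos _).le) (fun n => ?_)
  rw [← Real.exp_add]
  apply Real.exp_le_exp.mpr
  have := amgm_bound a q n hq
  linarith

lemma summable_int_exp (a q : ℝ) (hq : 0 < q) :
    Summable fun k : ℤ => Real.exp (a * |(k:ℝ)| - q * (k:ℝ)^2) := by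
  apply Summable.of_nat_of_neg
  · have := summable_nat_exp a q hq
    apply this.congr
    intro n
    norm_num [abs_of_nonneg (by positivity : (0:ℝ) ≤ (n:ℝ))]
  · have := summable_nat_exp a q hq
    apply this.congr
    intro n
    push_cast
    rw [abs_neg, abs_of_nonneg (by positivity : (0:ℝ) ≤ (n:ℝ))]
    ring_nf

lemma summable_pi_prod {h : ℤ → ℝ} (h0 : ∀ k, 0 ≤ h k) (hs : Summable h) (g : ℕ) :
    Summable fun n : Fin g → ℤ => ∏ i, h (n i) := by
  induction g with
  | zero => exact Summable.of_finite
  | succ k ih =>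
    have hP : 0 ≤ fun n : Fin k → ℤ => ∏ i, h (n i) :=
      fun n => Finset.prod_nonneg fun i _ => h0 _
    have h0' : 0 ≤ h := fun x => h0 x
    have hprod := hs.mul_of_nonneg ih h0' hP
    rw [← (Fin.consEquiv (fun _ => ℤ)).summable_iff]
    apply hprod.congr
    intro p
    simp only [Function.comp]
    rw [Fin.prod_univ_succ]
    simp [Fin.consEquiv]

noncomputable def qf {g : ℕ} (A : Matrix (Fin g) (Fin g) ℝ) (z : Fin g → ℝ)
    (n : Fin g → ℤ) : ℝ :=
  (1 / 2) * ((fun s => (n s : ℝ)) ⬝ᵥ A.mulVec (fun s => (n s : ℝ)))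
    + (fun s => (n s : ℝ)) ⬝ᵥ z

noncomputable def Theta {g : ℕ} (A : Matrix (Fin g) (Fin g) ℝ) (z : Fin g → ℝ) : ℝ :=
  - sInf (Set.range (qf A z))

-- qf lower bound
lemma qf_lb {g : ℕ} {A : Matrix (Fin g) (Fin g) ℝ} (hA : A.PosDef) (z : Fin g → ℝ)
    (hco : ∃ c > 0, ∀ x : Fin g → ℝ, c * (∑ i, x i ^ 2) ≤ x ⬝ᵥ A.mulVec x) :
    ∃ c > 0, ∃ b ≥ (0:ℝ), ∀ n : Fin g → ℤ,
      ∑ i, (c * ((n i : ℝ))^2 - b * |((n i : ℝ))|) ≤ qf A z n := by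
  obtain ⟨c0, hc0, hc⟩ := hco
  refine ⟨c0/2, by positivity, ∑ j, |z j|, Finset.sum_nonneg fun j _ => abs_nonneg _, fun n => ?_⟩
  set b : ℝ := ∑ j, |z j| with hb
  set x : Fin g → ℝ := fun s => (n s : ℝ) with hx
  have key : ∑ i, (c0/2 * x i^2 - b * |x i|) = c0/2 * ∑ i, x i^2 - b * ∑ i, |x i| := by
    rw [Finset.sum_sub_distrib, Finset.mul_sum, Finset.mul_sum]
  have h1 : c0/2 * ∑ i, x i^2 ≤ (1/2) * (x ⬝ᵥ A.mulVec x) := by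
    have := hc x; linarith
  have h3 : -(b * ∑ i, |x i|) ≤ ∑ i, x i * z i := by
    rw [Finset.mul_sum, ← Finset.sum_neg_distrib]
    apply Finset.sum_le_sum
    intro i _
    have hzb : |z i| ≤ b := Finset.single_le_sum (f := fun j => |z j|)
      (fun j _ => abs_nonneg _) (Finset.mem_univ i)
    have h4 : |x i| * |z i| ≤ |x i| * b := mul_le_mul_of_nonneg_left hzb (abs_nonneg _)
    have h5 := neg_abs_le (x i * z i)
    rw [abs_mul] at h5
    nlinarith
  unfold qf
  rw [show (fun s => ((n s : ℝ))) ⬝ᵥ z = ∑ i, x i * z i from rfl]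
  calc ∑ i, (c0/2 * ((n i : ℝ))^2 - b * |((n i : ℝ))|)
      = c0/2 * ∑ i, x i^2 - b * ∑ i, |x i| := key
    _ ≤ (1/2) * (x ⬝ᵥ A.mulVec x) + ∑ i, x i * z i := by linarith

/-- Ultradiscretization limit: the theta series `ϑ_ε(z) = Σ_n exp(-((1/2)nᵀAn + nᵀz)/ε)`
converges for every `ε > 0`, and `ε log ϑ_ε(z) → Θ(z)` as `ε → 0⁺`. -/
theorem stmt19 (g : ℕ) (A : Matrix (Fin g) (Fin g) ℝ) (hA : A.PosDef) (z : Fin g → ℝ) :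
    (∀ ε : ℝ, 0 < ε → Summable fun n : Fin g → ℤ => Real.exp (-(qf A z n) / ε)) ∧
    Tendsto (fun ε : ℝ => ε * Real.log (∑' n : Fin g → ℤ, Real.exp (-(qf A z n) / ε)))
      (nhdsWithin 0 (Set.Ioi 0)) (nhds (Theta A z)) := by
  obtain ⟨c, hc, b, hb, hlb⟩ := qf_lb hA z (coercive hA)
  -- summability
  have hsum : ∀ ε : ℝ, 0 < ε → Summable fun n : Fin g → ℤ => Real.exp (-(qf A z n) / ε) := by
    intro ε hε
    have h1 : Summable fun k : ℤ => Real.exp ((b/ε) * |(k:ℝ)| - (c/ε) * (k:ℝ)^2) :=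
      summable_int_exp _ _ (div_pos hc hε)
    refine (summable_pi_prod (fun k => (Real.exp_pos _).le) h1 g).of_nonneg_of_le
      (fun n => (Real.exp_pos _).le) (fun n => ?_)
    rw [← Real.exp_sum]
    apply Real.exp_le_exp.mpr
    have hsumeq : (∑ i, ((b/ε)*|((n i):ℝ)| - (c/ε)*((n i):ℝ)^2)) * ε
        = ∑ i, (b*|((n i):ℝ)| - c*((n i):ℝ)^2) := by
      rw [Finset.sum_mul]
      refine Finset.sum_congr rfl fun i _ => ?_
      field_simp
    rw [div_le_iff₀ hε, hsumeq]
    have h2 := hlb n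
    have h3 : ∑ i, (b*|((n i):ℝ)| - c*((n i):ℝ)^2)
        = -∑ i, (c * ((n i):ℝ)^2 - b * |((n i):ℝ)|) := by
      rw [← Finset.sum_neg_distrib]
      refine Finset.sum_congr rfl fun i _ => by ring
    rw [h3]
    linarith
  refine ⟨hsum, ?_⟩
  set f := qf A z with hf
  have hne : (Set.range f).Nonempty := ⟨f 0, Set.mem_range_self 0⟩
  -- per-coordinate lower bound
  have hper : ∀ t : ℝ, -(b^2/(4*c)) ≤ c * t^2 - b * |t| := by
    intro t
    rw [neg_le, le_div_iff₀ (by positivity)]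
    have h1 : (c*|t|)^2 = (c*t)^2 := by rw [mul_pow, mul_pow, sq_abs]
    nlinarith [sq_nonneg (2*(c*|t|) - b), h1]
  have hLB : ∀ n : Fin g → ℤ, (g:ℝ) * (-(b^2/(4*c))) ≤ f n := by
    intro n
    refine le_trans ?_ (hlb n)
    have := Finset.card_nsmul_le_sum Finset.univ
      (fun i => c * ((n i):ℝ)^2 - b * |((n i):ℝ)|) (-(b^2/(4*c)))
      (fun i _ => hper _)
    simpa [nsmul_eq_mul] using this
  have hbdd : BddBelow (Set.range f) := ⟨_, by rintro _ ⟨n, rfl⟩; exact hLB n⟩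
  set m := sInf (Set.range f) with hm
  have hm_le : ∀ n, m ≤ f n := fun n => csInf_le hbdd ⟨n, rfl⟩
  have hS1 : Summable (fun n : Fin g → ℤ => Real.exp (-(f n - m))) := by
    have heq : (fun n : Fin g → ℤ => Real.exp (-(f n - m)))
        = fun n => Real.exp m * Real.exp (-(f n)/1) := by
      funext n; rw [← Real.exp_add]; ring_nf
    rw [heq]
    exact (hsum 1 one_pos).mul_left _
  set S : ℝ := ∑' n : Fin g → ℤ, Real.exp (-(f n - m)) with hS
  have hSpos : 0 < S :=
    lt_of_lt_of_le (Real.exp_pos _) (hS1.le_tsum 0 (fun _ _ => (Real.exp_pos _).le))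
  have hTheta : Theta A z = -m := rfl
  rw [hTheta, Metric.tendsto_nhdsWithin_nhds]
  intro δ hδ
  obtain ⟨y, hy_mem, hy⟩ := Real.lt_sInf_add_pos hne (half_pos hδ)
  obtain ⟨n₀, rfl⟩ := hy_mem
  refine ⟨min 1 (δ/(2*(|Real.log S| + 1))), lt_min one_pos (by positivity), ?_⟩
  intro ε hε hdist
  rw [Set.mem_Ioi] at hε
  rw [Real.dist_eq, sub_zero, abs_of_pos hε] at hdist
  have hε1 : ε ≤ 1 := (lt_min_iff.mp hdist).1.le
  have hεδ : ε < δ/(2*(|Real.log S| + 1)) := (lt_min_iff.mp hdist).2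
  set Sig : ℝ := ∑' n : Fin g → ℤ, Real.exp (-(f n) / ε) with hSig
  have hterm : Real.exp (-(f n₀)/ε) ≤ Sig :=
    (hsum ε hε).le_tsum n₀ (fun _ _ => (Real.exp_pos _).le)
  have hSigpos : 0 < Sig := lt_of_lt_of_le (Real.exp_pos _) hterm
  -- lower bound
  have hlow : -(f n₀) ≤ ε * Real.log Sig := by
    have h4 : -(f n₀)/ε ≤ Real.log Sig := by
      have := Real.log_le_log (Real.exp_pos _) hterm
      rwa [Real.log_exp] at this
    calc -(f n₀) = ε * (-(f n₀)/ε) := by field_simp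
      _ ≤ ε * Real.log Sig := mul_le_mul_of_nonneg_left h4 hε.le
  -- upper bound
  have hup : Sig ≤ Real.exp (-m/ε) * S := by
    rw [hS, ← tsum_mul_left]
    refine Summable.tsum_le_tsum (fun n => ?_) (hsum ε hε) (hS1.mul_left _)
    rw [← Real.exp_add]
    apply Real.exp_le_exp.mpr
    have hd : 0 ≤ f n - m := sub_nonneg.mpr (hm_le n)
    have h5 : f n - m ≤ (f n - m)/ε := by
      rw [le_div_iff₀ hε]
      exact mul_le_of_le_one_right hd hε1
    have h6 : -(f n)/ε = -m/ε - (f n - m)/ε := by ring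
    linarith
  have hlogup : Real.log Sig ≤ -m/ε + Real.log S := by
    have := Real.log_le_log hSigpos hup
    rwa [Real.log_mul (Real.exp_ne_zero _) (ne_of_gt hSpos), Real.log_exp] at this
  have hupper : ε * Real.log Sig ≤ -m + ε * Real.log S := by
    have h7 := mul_le_mul_of_nonneg_left hlogup hε.le
    have h8 : ε * (-m/ε + Real.log S) = -m + ε * Real.log S := by field_simp
    linarith
  rw [Real.dist_eq]
  have h9 : ε * Real.log S ≤ ε * |Real.log S| :=
    mul_le_mul_of_nonneg_left (le_abs_self _) hε.le
  have h10 : ε * |Real.log S| < δ/2 := by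
    have h11 : ε * (|Real.log S| + 1) < δ/2 := by
      have := mul_lt_mul_of_pos_right hεδ (by positivity : (0:ℝ) < |Real.log S| + 1)
      calc ε * (|Real.log S| + 1) < δ/(2*(|Real.log S| + 1)) * (|Real.log S| + 1) := this
        _ = δ/2 := by field_simp
    nlinarith [abs_nonneg (Real.log S), hε]
  rw [abs_lt]
  constructor
  · -- -δ < ε log Sig - (-m)
    have : f n₀ < m + δ/2 := hy
    linarith
  · linarith
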